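/- With the setup of the support iteration (J₀ = f the ≤_t-bottom, J_{i+1} = f ⊓_k Φ(I ⊔_k J_i), Φ being ≤_k-monotone, in an interlaced bilattice), the sequence J_i is monotone non-decreasing under the truth order ≤_t. -/

import Mathlib

/-- A (complete, interlaced) bilattice: a carrier `B` with two partial orders,
the truth order `tle` and the knowledge order `kle`, each giving `B` the
structure of a complete lattice, such that all four binary lattice operations
are monotone with respect to both orderings (interlacing), and with `fbot`
the least element of the truth order. -/
structure Bilattice (B : Type*) where
  tle : B → B → Prop
  kle : B → B → Prop
  tle_refl : ∀ x, tle x x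
  tle_trans : ∀ {x y z}, tle x y → tle y z → tle x z
  tle_antisymm : ∀ {x y}, tle x y → tle y x → x = y
  kle_refl : ∀ x, kle x x
  kle_trans : ∀ {x y z}, kle x y → kle y z → kle x z
  kle_antisymm : ∀ {x y}, kle x y → kle y x → x = y
  tinf : B → B → B
  tsup : B → B → B
  kinf : B → B → B
  ksup : B → B → B
  tinf_le_left : ∀ x y, tle (tinf x y) x
  tinf_le_right : ∀ x y, tle (tinf x y) y
  le_tinf : ∀ {x y z}, tle z x → tle z y → tle z (tinf x y)
  le_tsup_left : ∀ x y, tle x (tsup x y)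
  le_tsup_right : ∀ x y, tle y (tsup x y)
  tsup_le : ∀ {x y z}, tle x z → tle y z → tle (tsup x y) z
  kinf_le_left : ∀ x y, kle (kinf x y) x
  kinf_le_right : ∀ x y, kle (kinf x y) y
  le_kinf : ∀ {x y z}, kle z x → kle z y → kle z (kinf x y)
  le_ksup_left : ∀ x y, kle x (ksup x y)
  le_ksup_right : ∀ x y, kle y (ksup x y)
  ksup_le : ∀ {x y z}, kle x z → kle y z → kle (ksup x y) z
  tSInf : Set B → B
  tSInf_le : ∀ S, ∀ x ∈ S, tle (tSInf S) x
  le_tSInf : ∀ S x, (∀ y ∈ S, tle x y) → tle x (tSInf S)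
  tSSup : Set B → B
  le_tSSup : ∀ S, ∀ x ∈ S, tle x (tSSup S)
  tSSup_le : ∀ S x, (∀ y ∈ S, tle y x) → tle (tSSup S) x
  kSInf : Set B → B
  kSInf_le : ∀ S, ∀ x ∈ S, kle (kSInf S) x
  le_kSInf : ∀ S x, (∀ y ∈ S, kle x y) → kle x (kSInf S)
  kSSup : Set B → B
  le_kSSup : ∀ S, ∀ x ∈ S, kle x (kSSup S)
  kSSup_le : ∀ S x, (∀ y ∈ S, kle y x) → kle (kSSup S) x
  fbot : B
  fbot_le : ∀ x, tle fbot x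
  tinf_mono_t : ∀ {x y x' y'}, tle x y → tle x' y' → tle (tinf x x') (tinf y y')
  tinf_mono_k : ∀ {x y x' y'}, kle x y → kle x' y' → kle (tinf x x') (tinf y y')
  tsup_mono_t : ∀ {x y x' y'}, tle x y → tle x' y' → tle (tsup x x') (tsup y y')
  tsup_mono_k : ∀ {x y x' y'}, kle x y → kle x' y' → kle (tsup x x') (tsup y y')
  kinf_mono_t : ∀ {x y x' y'}, tle x y → tle x' y' → tle (kinf x x') (kinf y y')
  kinf_mono_k : ∀ {x y x' y'}, kle x y → kle x' y' → kle (kinf x x') (kinf y y')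
  ksup_mono_t : ∀ {x y x' y'}, tle x y → tle x' y' → tle (ksup x x') (ksup y y')
  ksup_mono_k : ∀ {x y x' y'}, kle x y → kle x' y' → kle (ksup x x') (ksup y y')

open Ordinal in
/-- The support iteration J₀ = f (the ≤_t-bottom), J_{i+1} = f ⊗ Φ(I ⊕ J_i)
(with knowledge meets at limit ordinals), for a ≤_k-monotone Φ in an
interlaced bilattice, is monotone non-decreasing under the truth order ≤_t. -/
theorem stmt_10 {B : Type*} (L : Bilattice B)
    (Φ : B → B) (hΦ : ∀ {x y : B}, L.kle x y → L.kle (Φ x) (Φ y))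
    (I : B) (J : Ordinal → B)
    (h0 : J 0 = L.fbot)
    (hsucc : ∀ i : Ordinal, J (Order.succ i) = L.kinf L.fbot (Φ (L.ksup I (J i))))
    (hlim : ∀ l : Ordinal, Order.IsSuccLimit l → J l = L.kSInf (J '' Set.Iio l)) :
    ∀ i j : Ordinal, i ≤ j → L.tle (J i) (J j) := by
  -- First: J is antitone in the knowledge order.
  have key : ∀ j i : Ordinal, i ≤ j → L.kle (J j) (J i) := by
    intro j
    induction j using Ordinal.induction with
    | _ j ih =>
      intro i hij
      rcases eq_or_lt_of_le hij with rfl | hlt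
      · exact L.kle_refl _
      rcases Ordinal.zero_or_succ_or_isSuccLimit j with rfl | ⟨k, rfl⟩ | hj
      · exact absurd hlt (not_lt_zero (a := i))
      · have hik : i ≤ k := Order.lt_succ_iff.mp hlt
        rcases Ordinal.zero_or_succ_or_isSuccLimit i with rfl | ⟨m, rfl⟩ | hi
        · rw [h0, hsucc]
          exact L.kinf_le_left _ _
        · have hmk : m ≤ k := le_trans (le_of_lt (Order.lt_succ m)) hik
          rw [hsucc, hsucc]
          exact L.kinf_mono_k (L.kle_refl _)
            (hΦ (L.ksup_mono_k (L.kle_refl _) (ih k (Order.lt_succ k) m hmk)))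
        · rw [hlim i hi]
          apply L.le_kSInf
          rintro y ⟨p, hp, rfl⟩
          have hpk : p ≤ k := le_of_lt (lt_of_lt_of_le hp hik)
          have hsp : Order.succ p < Order.succ k :=
            lt_of_lt_of_le (lt_of_lt_of_le (hi.succ_lt hp) hik) (Order.le_succ k)
          have h1 : L.kle (J (Order.succ k)) (J (Order.succ p)) := by
            rw [hsucc, hsucc]
            exact L.kinf_mono_k (L.kle_refl _)
              (hΦ (L.ksup_mono_k (L.kle_refl _) (ih k (Order.lt_succ k) p hpk)))
          exact L.kle_trans h1 (ih (Order.succ p) hsp p (le_of_lt (Order.lt_succ p)))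
      · rw [hlim j hj]
        exact L.kSInf_le _ (J i) ⟨i, hlt, rfl⟩
  intro i j hij
  have hfb : L.kle (J i) L.fbot := by
    have := key i 0 (zero_le (a := i))
    rwa [h0] at this
  have heq : L.kinf L.fbot (J i) = J i :=
    L.kle_antisymm (L.kinf_le_right _ _) (L.le_kinf hfb (L.kle_refl _))
  have hk := key j i hij
  have h1 : L.tle (L.kinf L.fbot (J i)) (L.kinf (J j) (J i)) :=
    L.kinf_mono_t (L.fbot_le _) (L.tle_refl _)
  have h2 : L.kinf (J j) (J i) = J j :=
    L.kle_antisymm (L.kinf_le_left _ _) (L.le_kinf (L.kle_refl _) hk)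
  rw [heq, h2] at h1
  exact h1
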